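/- If a·(u₁⊗…⊗u_d) is a best rank one approximation of a nonzero tensor T ∈ ℝ^{n₁×…×n_d}, then for each i ∈ [d] the contraction T × ⊗_{j≠i} u_j equals λ u_i, where λ = ⟨T, u₁⊗…⊗u_d⟩ satisfies |λ| = ‖T‖_{∞,2}. -/
import Mathlib

noncomputable section

/-- The decomposable tensor `x₁ ⊗ ⋯ ⊗ x_d`, as a multi-indexed array. -/
def dtens {ι : Type*} [Fintype ι] {n : ι → ℕ} (x : ∀ j, Fin (n j) → ℝ) :
    (∀ j, Fin (n j)) → ℝ :=
  fun idx => ∏ j, x j (idx j)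

/-- Entrywise inner product of tensors. -/
def tinner {ι : Type*} [Fintype ι] [DecidableEq ι] {n : ι → ℕ}
    (S T : (∀ j, Fin (n j)) → ℝ) : ℝ :=
  ∑ idx, S idx * T idx

/-- Hilbert–Schmidt norm of a tensor. -/
def hsNorm {ι : Type*} [Fintype ι] [DecidableEq ι] {n : ι → ℕ}
    (T : (∀ j, Fin (n j)) → ℝ) : ℝ :=
  Real.sqrt (∑ idx, T idx ^ 2)

/-- `v` is a unit vector in `ℝ^m`. -/
def isUnitVec {m : ℕ} (v : Fin m → ℝ) : Prop := ∑ i, v i ^ 2 = 1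

/-- The spectral (`(∞,2)`-Schatten) norm of a tensor: the supremum of
`|⟨T, x₁ ⊗ ⋯ ⊗ x_d⟩|` over unit vectors `x_j`. -/
def specNorm {ι : Type*} [Fintype ι] [DecidableEq ι] {n : ι → ℕ}
    (T : (∀ j, Fin (n j)) → ℝ) : ℝ :=
  sSup {r | ∃ x : ∀ j, Fin (n j) → ℝ, (∀ j, isUnitVec (x j)) ∧ r = |tinner T (dtens x)|}

/-- The contraction `T × ⊗_{j ≠ i} u_j ∈ ℝ^{n_i}`. -/
def contrAt {d : ℕ} {n : Fin d → ℕ} (T : (∀ j, Fin (n j)) → ℝ)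
    (u : ∀ j, Fin (n j) → ℝ) (i : Fin d) : Fin (n i) → ℝ :=
  fun k => ∑ idx : ∀ j, Fin (n j),
    if idx i = k then T idx * ∏ j ∈ Finset.univ.erase i, u j (idx j) else 0

lemma dtens_sq_sum {d : ℕ} {n : Fin d → ℕ} (x : ∀ j, Fin (n j) → ℝ)
    (hx : ∀ j, isUnitVec (x j)) : ∑ idx, dtens x idx ^ 2 = 1 := by
  have h1 : ∀ idx : ∀ j, Fin (n j), dtens x idx ^ 2 = ∏ j, (x j (idx j)) ^ 2 := by
    intro idx; rw [dtens, ← Finset.prod_pow]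
  simp_rw [h1]
  rw [← Fintype.piFinset_univ, ← Finset.prod_univ_sum (f := fun j k => x j k ^ 2)]
  simp only [isUnitVec] at hx
  exact Finset.prod_eq_one fun j _ => hx j

lemma contr_dot {d : ℕ} {n : Fin d → ℕ} (T : (∀ j, Fin (n j)) → ℝ)
    (u : ∀ j, Fin (n j) → ℝ) (i : Fin d) (w : Fin (n i) → ℝ) :
    tinner T (dtens (Function.update u i w)) = ∑ k, contrAt T u i k * w k := by
  have hprod : ∀ idx : ∀ j, Fin (n j), ∏ j, Function.update u i w j (idx j)
      = w (idx i) * ∏ j ∈ Finset.univ.erase i, u j (idx j) := by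
    intro idx
    rw [← Finset.mul_prod_erase Finset.univ _ (Finset.mem_univ i), Function.update_self]
    congr 1
    exact Finset.prod_congr rfl fun j hj => by
      rw [Function.update_of_ne (Finset.ne_of_mem_erase hj)]
  unfold tinner dtens contrAt
  simp_rw [hprod, Finset.sum_mul, ite_mul, zero_mul]
  rw [Finset.sum_comm]
  refine Finset.sum_congr rfl fun idx _ => ?_
  rw [Finset.sum_ite_eq]
  simp [mul_assoc, mul_comm (w (idx i))]

lemma sq_sum_expand {d : ℕ} {n : Fin d → ℕ} (T : (∀ j, Fin (n j)) → ℝ) (s : ℝ)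
    (x : ∀ j, Fin (n j) → ℝ) (hx : ∀ j, isUnitVec (x j)) :
    ∑ idx, (T idx - s * dtens x idx) ^ 2
      = (∑ idx, T idx ^ 2) - 2 * s * tinner T (dtens x) + s ^ 2 := by
  have h : ∀ idx : ∀ j, Fin (n j), (T idx - s * dtens x idx) ^ 2
      = T idx ^ 2 - 2 * s * (T idx * dtens x idx) + s ^ 2 * dtens x idx ^ 2 := by
    intro idx; ring
  simp_rw [h]
  rw [Finset.sum_add_distrib, Finset.sum_sub_distrib, ← Finset.mul_sum, ← Finset.mul_sum,
    dtens_sq_sum x hx, tinner]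
  ring

theorem stmt5 {d : ℕ} {n : Fin d → ℕ} (hn : ∀ j, 0 < n j)
    (T : (∀ j, Fin (n j)) → ℝ) (hT : T ≠ 0)
    (a : ℝ) (u : ∀ j, Fin (n j) → ℝ) (hu : ∀ j, isUnitVec (u j))
    (hbest : ∀ (s : ℝ) (x : ∀ j, Fin (n j) → ℝ), (∀ j, isUnitVec (x j)) →
      hsNorm (T - a • dtens u) ≤ hsNorm (T - s • dtens x)) :
    (∀ i, contrAt T u i = tinner T (dtens u) • u i) ∧
      |tinner T (dtens u)| = specNorm T := by
  set lam := tinner T (dtens u) with hlam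
  -- squared best approximation inequality
  have key : ∀ (s : ℝ) (x : ∀ j, Fin (n j) → ℝ), (∀ j, isUnitVec (x j)) →
      (∑ idx, T idx ^ 2) - 2 * a * lam + a ^ 2
        ≤ (∑ idx, T idx ^ 2) - 2 * s * tinner T (dtens x) + s ^ 2 := by
    intro s x hx
    have h := hbest s x hx
    unfold hsNorm at h
    simp only [Pi.sub_apply, Pi.smul_apply, smul_eq_mul] at h
    rw [sq_sum_expand T a u hu, sq_sum_expand T s x hx] at h
    have hA : (0:ℝ) ≤ ∑ idx, (T idx - a * dtens u idx) ^ 2 :=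
      Finset.sum_nonneg fun _ _ => sq_nonneg _
    calc (∑ idx, T idx ^ 2) - 2 * a * lam + a ^ 2
        = Real.sqrt ((∑ idx, T idx ^ 2) - 2 * a * lam + a ^ 2) ^ 2 := by
          rw [Real.sq_sqrt (by rw [sq_sum_expand T a u hu] at hA; exact hA)]
      _ ≤ Real.sqrt ((∑ idx, T idx ^ 2) - 2 * s * tinner T (dtens x) + s ^ 2) ^ 2 := by
          have hB : (0:ℝ) ≤ ∑ idx, (T idx - s * dtens x idx) ^ 2 :=
            Finset.sum_nonneg fun _ _ => sq_nonneg _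
          exact pow_le_pow_left₀ (Real.sqrt_nonneg _) h 2
      _ = (∑ idx, T idx ^ 2) - 2 * s * tinner T (dtens x) + s ^ 2 := by
          have hB : (0:ℝ) ≤ ∑ idx, (T idx - s * dtens x idx) ^ 2 :=
            Finset.sum_nonneg fun _ _ => sq_nonneg _
          rw [Real.sq_sqrt (by rw [sq_sum_expand T s x hx] at hB; exact hB)]
  -- a = lam
  have ha : a = lam := by
    have h1 := key lam u hu
    rw [← hlam] at h1
    have h2 : (a - lam) ^ 2 ≤ 0 := by nlinarith
    have h3 : (a - lam) ^ 2 = 0 := le_antisymm h2 (sq_nonneg _)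
    have := sq_eq_zero_iff.mp h3
    linarith [sub_eq_zero.mp this, this]
  -- bound on inner products
  have hbound : ∀ x : ∀ j, Fin (n j) → ℝ, (∀ j, isUnitVec (x j)) →
      |tinner T (dtens x)| ≤ |lam| := by
    intro x hx
    have h := key (tinner T (dtens x)) x hx
    rw [ha] at h
    have hsq : tinner T (dtens x) ^ 2 ≤ lam ^ 2 := by nlinarith
    calc |tinner T (dtens x)| = Real.sqrt (tinner T (dtens x) ^ 2) :=
          (Real.sqrt_sq_eq_abs _).symm
      _ ≤ Real.sqrt (lam ^ 2) := Real.sqrt_le_sqrt hsq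
      _ = |lam| := Real.sqrt_sq_eq_abs _
  constructor
  · -- contraction identity
    intro i
    have hvu : (∑ k, contrAt T u i k * u i k) = lam := by
      rw [← contr_dot, Function.update_eq_self]
    have hdot : ∀ w : Fin (n i) → ℝ, isUnitVec w →
        |∑ k, contrAt T u i k * w k| ≤ |lam| := by
      intro w hw
      have hx : ∀ j, isUnitVec (Function.update u i w j) := by
        intro j
        rcases eq_or_ne j i with rfl | hji
        · rw [Function.update_self]; exact hw
        · rw [Function.update_of_ne hji]; exact hu j
      have := hbound _ hx
      rwa [contr_dot] at this
    have hnorm : ∑ k, contrAt T u i k ^ 2 ≤ lam ^ 2 := by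
      set s := ∑ k, contrAt T u i k ^ 2 with hs
      have hs0 : 0 ≤ s := Finset.sum_nonneg fun _ _ => sq_nonneg _
      rcases eq_or_lt_of_le hs0 with heq | hpos
      · rw [← heq]; exact sq_nonneg _
      · set w : Fin (n i) → ℝ := fun k => contrAt T u i k / Real.sqrt s with hwdef
        have hsqrt : 0 < Real.sqrt s := Real.sqrt_pos.mpr hpos
        have hwunit : isUnitVec w := by
          unfold isUnitVec
          simp_rw [hwdef, div_pow, ← Finset.sum_div, Real.sq_sqrt hs0]
          exact div_self (ne_of_gt hpos)
        have hwdot : (∑ k, contrAt T u i k * w k) = Real.sqrt s := by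
          simp_rw [hwdef, mul_div_assoc', ← Finset.sum_div]
          have : ∀ k, contrAt T u i k * contrAt T u i k = contrAt T u i k ^ 2 :=
            fun k => (sq _).symm
          simp_rw [this, ← hs]
          exact Real.div_sqrt
        have h := hdot w hwunit
        rw [hwdot, abs_of_nonneg (Real.sqrt_nonneg _)] at h
        calc s = Real.sqrt s ^ 2 := (Real.sq_sqrt hs0).symm
          _ ≤ |lam| ^ 2 := pow_le_pow_left₀ (Real.sqrt_nonneg _) h 2
          _ = lam ^ 2 := sq_abs _
    have hw : ∑ k, (contrAt T u i k - lam * u i k) ^ 2 ≤ 0 := by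
      have hexp : ∀ k, (contrAt T u i k - lam * u i k) ^ 2
          = contrAt T u i k ^ 2 - 2 * lam * (contrAt T u i k * u i k)
            + lam ^ 2 * u i k ^ 2 := fun k => by ring
      simp_rw [hexp]
      rw [Finset.sum_add_distrib, Finset.sum_sub_distrib, ← Finset.mul_sum, ← Finset.mul_sum,
        hvu, hu i]
      nlinarith [hnorm]
    have hz : ∀ k ∈ Finset.univ, (contrAt T u i k - lam * u i k) ^ 2 = 0 :=
      (Finset.sum_eq_zero_iff_of_nonneg fun k _ => sq_nonneg _).mp
        (le_antisymm hw (Finset.sum_nonneg fun _ _ => sq_nonneg _))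
    funext k
    have := sub_eq_zero.mp (sq_eq_zero_iff.mp (hz k (Finset.mem_univ k)))
    simp only [Pi.smul_apply, smul_eq_mul]
    exact this
  · -- spectral norm
    have hmem : |lam| ∈ {r | ∃ x : ∀ j, Fin (n j) → ℝ,
        (∀ j, isUnitVec (x j)) ∧ r = |tinner T (dtens x)|} := ⟨u, hu, rfl⟩
    have hub : ∀ r ∈ {r | ∃ x : ∀ j, Fin (n j) → ℝ,
        (∀ j, isUnitVec (x j)) ∧ r = |tinner T (dtens x)|}, r ≤ |lam| := by
      rintro r ⟨x, hx, rfl⟩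
      exact hbound x hx
    exact le_antisymm (le_csSup ⟨|lam|, hub⟩ hmem) (Real.sSup_le hub (abs_nonneg _))
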